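/- Under the empirical framework with informed weights, assume Pg = 0 and that Σ = Var_P(g) is positive definite. Let 𝓕 be a collection of measurable functions f : 𝒳 → ℝ admitting a measurable envelope F ∈ L²(P) (i.e. |f| ≤ F for all f ∈ 𝓕), and assume that almost surely sup_{f ∈ 𝓕} |ℙ_n f − P f| → 0 as n → ∞ (𝓕 is a P-Glivenko–Cantelli class, the suprema being measurable). Then almost surely sup_{f ∈ 𝓕} |ℙ_n^I f − P f| → 0 as n → ∞, where ℙ_n^I f = ℙ_n f − cov_n(g,f)ᵀ Σ_n^{-1} ℙ_n g. -/

import Mathlib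

open MeasureTheory ProbabilityTheory Filter Matrix

/-- if `𝓕` is a `P`-Glivenko–Cantelli class with square-integrable
envelope `F`, then the informed empirical measure
`ℙₙᴵ f = ℙₙ f − covₙ(g,f)ᵀ Σₙ⁻¹ ℙₙ g` also satisfies
`sup_{f ∈ 𝓕} |ℙₙᴵ f − P f| → 0` almost surely. -/
theorem stmt13 {Ω 𝓧 : Type*} [MeasurableSpace Ω] [MeasurableSpace 𝓧]
    (μ : Measure Ω) [IsProbabilityMeasure μ]
    (P : Measure 𝓧) [IsProbabilityMeasure P]
    (m : ℕ) (hm : 0 < m)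
    (X : ℕ → Ω → 𝓧) (hXmeas : ∀ i, Measurable (X i))
    (hXid : ∀ i, Measure.map (X i) μ = P)
    (hXindep : iIndepFun X μ)
    (g : 𝓧 → Fin m → ℝ) (hgmeas : ∀ j, Measurable fun x => g x j)
    (hgL2 : ∀ j, MemLp (fun x => g x j) 2 P)
    (hPg : ∀ j, (∫ x, g x j ∂P) = 0)
    (Sig : Matrix (Fin m) (Fin m) ℝ)
    (hSig : ∀ j k, Sig j k = ∫ x, g x j * g x k ∂P)
    (hposdef : Sig.PosDef)
    (𝓕 : Set (𝓧 → ℝ)) (hFmeas : ∀ f ∈ 𝓕, Measurable f)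
    (Fenv : 𝓧 → ℝ) (hFenvmeas : Measurable Fenv)
    (hFenvL2 : MemLp Fenv 2 P)
    (henv : ∀ f ∈ 𝓕, ∀ x, |f x| ≤ Fenv x)
    (Pn : ℕ → Ω → (𝓧 → ℝ) → ℝ)
    (hPn : ∀ n ω f, Pn n ω f = (n : ℝ)⁻¹ * ∑ i ∈ Finset.range n, f (X i ω))
    (hGC : ∀ᵐ ω ∂μ,
      Tendsto (fun n : ℕ => ⨆ f : 𝓕, |Pn n ω f - ∫ x, (f : 𝓧 → ℝ) x ∂P|)
        atTop (nhds 0))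
    (Png : ℕ → Ω → Fin m → ℝ)
    (hPng : ∀ n ω j, Png n ω j = Pn n ω (fun x => g x j))
    (Sign : ℕ → Ω → Matrix (Fin m) (Fin m) ℝ)
    (hSign : ∀ n ω j k, Sign n ω j k =
      Pn n ω (fun x => g x j * g x k) - Png n ω j * Png n ω k)
    (covn : ℕ → Ω → (𝓧 → ℝ) → Fin m → ℝ)
    (hcovn : ∀ n ω f j,
      covn n ω f j = Pn n ω (fun x => g x j * f x) - Png n ω j * Pn n ω f)
    (PnI : ℕ → Ω → (𝓧 → ℝ) → ℝ)
    (hPnI : ∀ n ω f,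
      PnI n ω f = Pn n ω f - covn n ω f ⬝ᵥ ((Sign n ω)⁻¹ *ᵥ Png n ω)) :
    ∀ᵐ ω ∂μ,
      Tendsto (fun n : ℕ => ⨆ f : 𝓕, |PnI n ω f - ∫ x, (f : 𝓧 → ℝ) x ∂P|)
        atTop (nhds 0) := by
  have hFint : Integrable Fenv P := hFenvL2.integrable one_le_two
  -- Strong law of large numbers for the empirical means of a fixed integrable function
  have key : ∀ φ : 𝓧 → ℝ, Measurable φ → Integrable φ P →
      ∀ᵐ ω ∂μ, Tendsto (fun n => Pn n ω φ) atTop (nhds (∫ x, φ x ∂P)) := by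
    intro φ hφm hφi
    have hint : Integrable (fun ω => φ (X 0 ω)) μ := by
      rw [← hXid 0] at hφi
      exact (integrable_map_measure hφm.aestronglyMeasurable
        (hXmeas 0).aemeasurable).mp hφi
    have hindep : Pairwise (Function.onFun (IndepFun · · μ) fun i ω => φ (X i ω)) := by
      intro i j hij
      exact (hXindep.indepFun hij).comp hφm hφm
    have hident : ∀ i, IdentDistrib (fun ω => φ (X i ω)) (fun ω => φ (X 0 ω)) μ μ := by
      intro i
      exact IdentDistrib.comp
        ⟨(hXmeas i).aemeasurable, (hXmeas 0).aemeasurable, by rw [hXid i, hXid 0]⟩ hφm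
    have hE : (μ[fun ω => φ (X 0 ω)]) = ∫ x, φ x ∂P := by
      rw [← hXid 0, integral_map (hXmeas 0).aemeasurable hφm.aestronglyMeasurable]
    filter_upwards [strong_law_ae_real _ hint hindep hident] with ω hω
    rw [hE] at hω
    convert hω using 2 with n
    rw [hPn, div_eq_inv_mul]
  -- the individual limits we need
  have hA : ∀ᵐ ω ∂μ, ∀ j, Tendsto (fun n => Pn n ω (fun x => g x j)) atTop (nhds 0) := by
    rw [ae_all_iff]; intro j
    simpa [hPg j] using key (fun x => g x j) (hgmeas j) ((hgL2 j).integrable one_le_two)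
  have hprod : ∀ j k, Integrable (fun x => g x j * g x k) P := fun j k =>
    memLp_one_iff_integrable.mp
      (MemLp.smul (r := 1) (hgL2 k) (hgL2 j) (hpqr := ⟨by norm_num [ENNReal.inv_two_add_inv_two]⟩) :
        MemLp (fun x => g x j * g x k) 1 P)
  have hB : ∀ᵐ ω ∂μ, ∀ j k,
      Tendsto (fun n => Pn n ω (fun x => g x j * g x k)) atTop (nhds (Sig j k)) := by
    rw [ae_all_iff]; intro j; rw [ae_all_iff]; intro k
    rw [hSig j k]
    exact key _ ((hgmeas j).mul (hgmeas k)) (hprod j k)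
  have hCint : ∀ j, Integrable (fun x => |g x j| * Fenv x) P := fun j =>
    memLp_one_iff_integrable.mp
      (MemLp.smul (r := 1) hFenvL2 ((hgL2 j).abs) (hpqr := ⟨by norm_num [ENNReal.inv_two_add_inv_two]⟩) :
        MemLp (fun x => |g x j| * Fenv x) 1 P)
  have hC : ∀ᵐ ω ∂μ, ∀ j, Tendsto (fun n => Pn n ω (fun x => |g x j| * Fenv x)) atTop
      (nhds (∫ x, |g x j| * Fenv x ∂P)) := by
    rw [ae_all_iff]; intro j
    exact key _ (((hgmeas j).abs).mul hFenvmeas) (hCint j)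
  have hD := key Fenv hFenvmeas hFint
  filter_upwards [hGC, hA, hB, hC, hD] with ω hGCω hAω hBω hCω hDω
  rcases isEmpty_or_nonempty 𝓕 with hE | hNE
  · simp only [Real.iSup_of_isEmpty]
    exact tendsto_const_nhds
  -- basic empirical-mean comparison
  have habs : ∀ (h H : 𝓧 → ℝ), (∀ x, |h x| ≤ H x) → ∀ n, |Pn n ω h| ≤ Pn n ω H := by
    intro h H hle n
    rw [hPn, hPn, abs_mul, abs_inv, Nat.abs_cast]
    refine mul_le_mul_of_nonneg_left ?_ (by positivity)
    exact (Finset.abs_sum_le_sum_abs _ _).trans (Finset.sum_le_sum fun i _ => hle _)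
  have hPngt : ∀ j, Tendsto (fun n => Png n ω j) atTop (nhds 0) := by
    intro j; simp_rw [hPng]; exact hAω j
  have hSigt : Tendsto (fun n => Sign n ω) atTop (nhds Sig) := by
    refine tendsto_pi_nhds.2 fun j => ?_; rw [tendsto_pi_nhds]; intro k
    simp_rw [hSign]
    simpa using (hBω j k).sub ((hPngt j).mul (hPngt k))
  have hdet : Tendsto (fun n => (Sign n ω).det) atTop (nhds Sig.det) :=
    ((Continuous.matrix_det continuous_id).tendsto Sig).comp hSigt
  have hadj : Tendsto (fun n => (Sign n ω).adjugate) atTop (nhds Sig.adjugate) :=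
    ((Continuous.matrix_adjugate continuous_id).tendsto Sig).comp hSigt
  have hinv : ∀ j k, Tendsto (fun n => ((Sign n ω)⁻¹) j k) atTop (nhds (Sig⁻¹ j k)) := by
    intro j k
    have h1 : Tendsto (fun n => (Sign n ω).adjugate j k) atTop (nhds (Sig.adjugate j k)) := by
      replace hadj := tendsto_pi_nhds.1 hadj
      have := hadj j
      rw [tendsto_pi_nhds] at this
      exact this k
    have h2 := (hdet.inv₀ hposdef.det_pos.ne').mul h1
    simp_rw [Matrix.inv_def, Matrix.smul_apply, Ring.inverse_eq_inv', smul_eq_mul]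
    exact h2
  have hv : ∀ j, Tendsto (fun n => ((Sign n ω)⁻¹ *ᵥ Png n ω) j) atTop (nhds 0) := by
    intro j
    have hrw : ∀ n, ((Sign n ω)⁻¹ *ᵥ Png n ω) j
        = ∑ k, ((Sign n ω)⁻¹) j k * Png n ω k := fun n => rfl
    simp_rw [hrw]
    simpa using tendsto_finset_sum Finset.univ (fun k _ => (hinv j k).mul (hPngt k))
  have hBt : ∀ j, Tendsto
      (fun n => Pn n ω (fun x => |g x j| * Fenv x) + |Png n ω j| * Pn n ω Fenv) atTop
      (nhds (∫ x, |g x j| * Fenv x ∂P)) := by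
    intro j
    simpa using (hCω j).add (((hPngt j).abs).mul hDω)
  have hCt : Tendsto (fun n => ∑ j,
      (Pn n ω (fun x => |g x j| * Fenv x) + |Png n ω j| * Pn n ω Fenv)
        * |((Sign n ω)⁻¹ *ᵥ Png n ω) j|) atTop (nhds 0) := by
    simpa using tendsto_finset_sum Finset.univ (fun j _ => (hBt j).mul ((hv j).abs))
  have hcovb : ∀ n, ∀ f ∈ 𝓕, ∀ j, |covn n ω f j|
      ≤ Pn n ω (fun x => |g x j| * Fenv x) + |Png n ω j| * Pn n ω Fenv := by
    intro n f hf j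
    rw [hcovn]
    refine (abs_sub _ _).trans (add_le_add ?_ ?_)
    · refine habs _ _ (fun x => ?_) n
      rw [abs_mul]
      exact mul_le_mul_of_nonneg_left (henv f hf x) (abs_nonneg _)
    · rw [abs_mul]
      exact mul_le_mul_of_nonneg_left (habs f Fenv (henv f hf) n) (abs_nonneg _)
  have hdot : ∀ n, ∀ f ∈ 𝓕, |covn n ω f ⬝ᵥ ((Sign n ω)⁻¹ *ᵥ Png n ω)|
      ≤ ∑ j, (Pn n ω (fun x => |g x j| * Fenv x) + |Png n ω j| * Pn n ω Fenv)
        * |((Sign n ω)⁻¹ *ᵥ Png n ω) j| := by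
    intro n f hf
    refine (Finset.abs_sum_le_sum_abs _ _).trans (Finset.sum_le_sum fun j _ => ?_)
    rw [abs_mul]
    exact mul_le_mul_of_nonneg_right (hcovb n f hf j) (abs_nonneg _)
  have hbdd : ∀ n, BddAbove (Set.range fun f : 𝓕 =>
      |Pn n ω f - ∫ x, (f : 𝓧 → ℝ) x ∂P|) := by
    intro n
    refine ⟨Pn n ω Fenv + ∫ x, Fenv x ∂P, ?_⟩
    rintro y ⟨f, rfl⟩
    refine (abs_sub _ _).trans (add_le_add (habs f Fenv (henv f f.2) n) ?_)
    have hfi : Integrable (f : 𝓧 → ℝ) P :=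
      hFint.mono' (hFmeas f f.2).aestronglyMeasurable
        (ae_of_all _ fun x => by rw [Real.norm_eq_abs]; exact henv f f.2 x)
    calc |∫ x, (f : 𝓧 → ℝ) x ∂P| ≤ ∫ x, |(f : 𝓧 → ℝ) x| ∂P := by
          simpa [Real.norm_eq_abs] using norm_integral_le_integral_norm (f : 𝓧 → ℝ) (μ := P)
      _ ≤ ∫ x, Fenv x ∂P := integral_mono hfi.abs hFint (henv f f.2)
  refine squeeze_zero (fun n => Real.iSup_nonneg fun f => abs_nonneg _) (fun n => ?_)
    (by simpa using hGCω.add hCt)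
  refine ciSup_le fun f => ?_
  have h1 : |PnI n ω f - ∫ x, (f : 𝓧 → ℝ) x ∂P|
      ≤ |Pn n ω f - ∫ x, (f : 𝓧 → ℝ) x ∂P|
        + |covn n ω f ⬝ᵥ ((Sign n ω)⁻¹ *ᵥ Png n ω)| := by
    rw [hPnI]
    have : Pn n ω f - covn n ω f ⬝ᵥ ((Sign n ω)⁻¹ *ᵥ Png n ω) - ∫ x, (f : 𝓧 → ℝ) x ∂P
        = (Pn n ω f - ∫ x, (f : 𝓧 → ℝ) x ∂P)
          - covn n ω f ⬝ᵥ ((Sign n ω)⁻¹ *ᵥ Png n ω) := by ring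
    rw [this]
    exact abs_sub _ _
  exact h1.trans (add_le_add (le_ciSup (hbdd n) f) (hdot n f f.2))
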